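/- Let k be a field and let g₀, …, g_{n−1} ∈ k[x₀,…,x_{n−1}] be forms of equal degree defining a birational map G of P^{n−1}. Define F: Pⁿ ⇢ Pⁿ by F = (x₀g₀ : x₀g₁ : ⋯ : x₀g_{n−1} : g₀·xₙ). Then F is a birational map of Pⁿ, and the assignment G ↦ F is multiplicative: if G, G' are two such birational maps of P^{n−1} then the map assigned to G ∘ G' equals (the map assigned to G) ∘ (the map assigned to G') as rational maps of Pⁿ (after cancelling common factors). -/

import Mathlib

open MvPolynomial

/-- The splitting `σ` sending a Cremona map `G = (g₀ : ⋯ : g_{n−1})` of `P^{n−1}` to the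
de Jonquières map `F = (x₀g₀ : ⋯ : x₀g_{n−1} : g₀xₙ)` of `Pⁿ`. -/
noncomputable def sigmaMap {k : Type} [Field k] {n : ℕ} (hn : 1 ≤ n)
    (g : Fin n → MvPolynomial (Fin n) k) :
    Fin (n + 1) → MvPolynomial (Fin (n + 1)) k :=
  fun i => Fin.lastCases
    (rename Fin.castSucc (g ⟨0, hn⟩) * X (Fin.last n))
    (fun j : Fin n => X (Fin.castSucc ⟨0, hn⟩) * rename Fin.castSucc (g j)) i

theorem sigmaMap_castSucc {k : Type} [Field k] {n : ℕ} (hn : 1 ≤ n)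
    (g : Fin n → MvPolynomial (Fin n) k) (j : Fin n) :
    sigmaMap hn g (Fin.castSucc j)
      = X (Fin.castSucc ⟨0, hn⟩) * rename Fin.castSucc (g j) := by
  simp [sigmaMap]

theorem sigmaMap_last {k : Type} [Field k] {n : ℕ} (hn : 1 ≤ n)
    (g : Fin n → MvPolynomial (Fin n) k) :
    sigmaMap hn g (Fin.last n)
      = rename Fin.castSucc (g ⟨0, hn⟩) * X (Fin.last n) := by
  simp [sigmaMap]


-- Lemma C: scalar pull-out
theorem aeval_mul_left_of_isHomogeneous {k : Type} [CommSemiring k] {σ : Type} [Fintype σ]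
    {S : Type} [CommSemiring S] [Algebra k S]
    {p : MvPolynomial σ k} {e : ℕ} (hp : p.IsHomogeneous e) (c : S) (f : σ → S) :
    aeval (fun i => c * f i) p = c ^ e * aeval f p := by
  classical
  rw [aeval_def, aeval_def, eval₂_eq, eval₂_eq, Finset.mul_sum]
  refine Finset.sum_congr rfl fun u hu => ?_
  have hdeg : ∑ i ∈ u.support, u i = e := by
    have h := hp (mem_support_iff.mp hu)
    rw [← h, Finsupp.weight_apply]
    simp [Finsupp.sum, mul_comm]
  rw [Finset.prod_congr rfl (fun i _ => mul_pow c (f i) (u i)), Finset.prod_mul_distrib,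
    Finset.prod_pow_eq_pow_sum, hdeg]
  ring
-- Sublemma G
theorem aeval_sigmaMap_rename {k : Type} [Field k] {n : ℕ} (hn : 1 ≤ n)
    (g' : Fin n → MvPolynomial (Fin n) k) {p : MvPolynomial (Fin n) k} {e : ℕ}
    (hp : p.IsHomogeneous e) :
    aeval (R := k) (sigmaMap hn g') (rename Fin.castSucc p)
      = X (Fin.castSucc ⟨0, hn⟩) ^ e * rename Fin.castSucc (aeval (R := k) g' p) := by
  rw [aeval_rename]
  have h1 : (sigmaMap hn g') ∘ Fin.castSucc
      = fun j => X (Fin.castSucc ⟨0, hn⟩) * rename Fin.castSucc (g' j) := by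
    funext j; exact sigmaMap_castSucc hn g' j
  rw [h1, aeval_mul_left_of_isHomogeneous hp]
  congr 1
  exact (comp_aeval_apply (f := g') (rename Fin.castSucc :
      MvPolynomial (Fin n) k →ₐ[k] MvPolynomial (Fin (n+1)) k) p).symm
-- Lemma A : no algebraic relation among (w * X i) for homogeneous w ≠ 0
theorem no_relation {k : Type} [Field k] {n : ℕ} {w : MvPolynomial (Fin n) k} {t : ℕ}
    (hw : w.IsHomogeneous t) (hw0 : w ≠ 0) {Φ : MvPolynomial (Fin n) k} (hΦ : Φ ≠ 0)
    (h : aeval (R := k) (fun i => w * X i) Φ = 0) : False := by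
  classical
  set N := Φ.totalDegree with hN
  have hsum : ∑ e ∈ Finset.range (N + 1), w ^ e * homogeneousComponent e Φ = 0 := by
    have h2 : aeval (R := k) (fun i => w * X i)
        (∑ e ∈ Finset.range (N + 1), homogeneousComponent e Φ) = 0 := by
      rw [sum_homogeneousComponent]; exact h
    rw [map_sum] at h2
    rw [← h2]
    refine Finset.sum_congr rfl fun e _ => ?_
    rw [aeval_mul_left_of_isHomogeneous (homogeneousComponent_isHomogeneous e Φ) w X,
      aeval_X_left_apply]
  -- the largest e with nonzero component
  have hex : ∃ e ∈ Finset.range (N + 1), homogeneousComponent e Φ ≠ 0 := by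
    by_contra hc
    push_neg at hc
    apply hΦ
    rw [← sum_homogeneousComponent Φ]
    exact Finset.sum_eq_zero hc
  set S := (Finset.range (N + 1)).filter (fun e => homogeneousComponent e Φ ≠ 0) with hS
  have hSne : S.Nonempty := by
    obtain ⟨e, he, hne⟩ := hex; exact ⟨e, Finset.mem_filter.mpr ⟨he, hne⟩⟩
  set E := S.max' hSne with hE
  have hES : E ∈ S := S.max'_mem hSne
  have hErange : E ∈ Finset.range (N + 1) := (Finset.mem_filter.mp hES).1
  have hEne : homogeneousComponent E Φ ≠ 0 := (Finset.mem_filter.mp hES).2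
  -- apply homogeneousComponent (E * (t+1)) to hsum
  have key : homogeneousComponent (E * (t + 1))
      (∑ e ∈ Finset.range (N + 1), w ^ e * homogeneousComponent e Φ) = 0 := by
    rw [hsum, map_zero]
  rw [map_sum] at key
  have hterm : ∀ e ∈ Finset.range (N + 1), e ≠ E →
      homogeneousComponent (E * (t + 1)) (w ^ e * homogeneousComponent e Φ) = 0 := by
    intro e _ hne
    have hh : (w ^ e * homogeneousComponent e Φ).IsHomogeneous (t * e + e) :=
      (hw.pow e).mul (homogeneousComponent_isHomogeneous e Φ)
    rw [homogeneousComponent_of_mem hh]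
    have : E * (t + 1) ≠ t * e + e := by
      intro hcontra
      apply hne
      have h1 : e * (t + 1) = E * (t + 1) := by rw [hcontra]; ring
      exact Nat.eq_of_mul_eq_mul_right (Nat.succ_pos t) h1
    simp [this]
  rw [Finset.sum_eq_single_of_mem E hErange hterm] at key
  have hh : (w ^ E * homogeneousComponent E Φ).IsHomogeneous (t * E + E) :=
    (hw.pow E).mul (homogeneousComponent_isHomogeneous E Φ)
  rw [homogeneousComponent_of_mem hh, if_pos (by ring)] at key
  rcases mul_eq_zero.mp key with h1 | h1
  · exact pow_ne_zero E hw0 h1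
  · exact hEne h1
theorem aeval_mem_span {k : Type} [Field k] {n : ℕ} {g : Fin n → MvPolynomial (Fin n) k}
    {j₀ : Fin n} (hg0 : g j₀ = 0) (P : MvPolynomial (Fin n) k) {D : ℕ}
    (hP : P.totalDegree ≤ D) :
    aeval (R := k) g P ∈ Submodule.span k (Set.range
      (fun γ : {j : Fin n // j ≠ j₀} → Fin (D + 1) =>
        ∏ j : {j : Fin n // j ≠ j₀}, g (j : Fin n) ^ (γ j : ℕ))) := by
  classical
  rw [aeval_def, eval₂_eq]
  apply Submodule.sum_mem
  intro u hu
  by_cases h0 : u j₀ = 0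
  · have hbd : ∀ j, u j ≤ D := by
      intro j
      refine le_trans (Finsupp.le_degree j u) (le_trans ?_ hP)
      have : u.degree = u.sum fun _ e => e := by
        simp [Finsupp.degree, Finsupp.sum]
        rfl
      rw [this]
      exact le_totalDegree hu
    set γ : {j : Fin n // j ≠ j₀} → Fin (D + 1) :=
      fun j => ⟨u j, Nat.lt_succ_of_le (hbd j)⟩ with hγ
    have hprod : ∏ i ∈ u.support, g i ^ u i
        = ∏ j : {j : Fin n // j ≠ j₀}, g (j : Fin n) ^ (γ j : ℕ) := by
      rw [Finset.prod_subset (Finset.subset_univ u.support)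
        (fun i _ hnot => by rw [Finsupp.notMem_support_iff.mp hnot, pow_zero])]
      rw [← Finset.prod_erase (f := fun i => g i ^ u i) (a := j₀) Finset.univ
        (by simp only [h0, pow_zero])]
      rw [Finset.prod_subtype (p := fun j => j ≠ j₀) (Finset.univ.erase j₀)
        (fun x => by simp [Finset.mem_erase]) (fun i => g i ^ u i)]
    rw [hprod, Algebra.smul_def (coeff u P) _ |>.symm]
    exact Submodule.smul_mem _ _ (Submodule.subset_span ⟨γ, rfl⟩)
  · have : ∏ i ∈ u.support, g i ^ u i = 0 := by
      refine Finset.prod_eq_zero (Finsupp.mem_support_iff.mpr h0) ?_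
      rw [hg0]
      exact zero_pow h0
    rw [this, mul_zero]
    exact Submodule.zero_mem _
theorem count_lt {n E' : ℕ} (hn : 1 ≤ n) :
    (n * ((n * (E' + 1) + 1) ^ n) * E' + 1) ^ (n - 1)
      < ((n * (E' + 1) + 1) ^ n + 1) ^ n := by
  set c := n * (E' + 1) + 1 with hc
  set M := c ^ n with hM
  have hc2 : 2 ≤ c := by
    have h := Nat.mul_le_mul hn (Nat.le_add_left 1 E')
    omega
  have hM1 : 1 ≤ M := Nat.one_le_pow _ _ (by omega)
  have hD : n * M * E' + 1 ≤ M * c := by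
    calc n * M * E' + 1 ≤ n * M * E' + M := by omega
    _ = M * (n * E' + 1) := by ring
    _ ≤ M * c := Nat.mul_le_mul_left M (by
        have : n * E' + n = n * (E' + 1) := by ring
        omega)
  have h1 : 0 < M ^ (n - 1) * c ^ (n - 1) := Nat.mul_pos (pow_pos (by omega) _) (pow_pos (by omega) _)
  calc (n * M * E' + 1) ^ (n - 1) ≤ (M * c) ^ (n - 1) := Nat.pow_le_pow_left hD _
    _ = M ^ (n - 1) * c ^ (n - 1) := mul_pow M c (n - 1)
    _ < (M ^ (n - 1) * c ^ (n - 1)) * c := by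
        nlinarith
    _ = M ^ (n - 1) * (c ^ (n - 1) * c) := by ring
    _ = M ^ (n - 1) * c ^ ((n - 1) + 1) := by rw [pow_succ]
    _ = M ^ (n - 1) * c ^ n := by rw [Nat.sub_add_cancel hn]
    _ = M ^ (n - 1) * M := by rw [hM]
    _ = M ^ ((n - 1) + 1) := (pow_succ M (n - 1)).symm
    _ = M ^ n := by rw [Nat.sub_add_cancel hn]
    _ < (M + 1) ^ n := Nat.pow_lt_pow_left (by omega) (by omega)

-- Lemma F : components of a Cremona map are nonzero
theorem g_ne_zero {k : Type} [Field k] {n : ℕ} (hn : 1 ≤ n)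
    {t : ℕ} {g q : Fin n → MvPolynomial (Fin n) k} {w : MvPolynomial (Fin n) k}
    (hw : w.IsHomogeneous t) (hw0 : w ≠ 0)
    (hq : ∀ i, aeval (R := k) g (q i) = w * X i) (j₀ : Fin n) : g j₀ ≠ 0 := by
  classical
  intro hg0
  set E' := Finset.univ.sup (fun i => (q i).totalDegree) with hE'
  set c := n * (E' + 1) + 1 with hc
  set M := c ^ n with hM
  set D := n * M * E' with hD
  set F : (Fin n → Fin (M + 1)) → MvPolynomial (Fin n) k :=
    fun α => ∏ i, (w * X i) ^ (α i : ℕ) with hF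
  set mono : ({j : Fin n // j ≠ j₀} → Fin (D + 1)) → MvPolynomial (Fin n) k :=
    fun γ => ∏ j : {j : Fin n // j ≠ j₀}, g (j : Fin n) ^ (γ j : ℕ) with hmono
  set V := Submodule.span k (Set.range mono) with hV
  have hmem : ∀ α, F α ∈ V := by
    intro α
    have h1 : F α = aeval (R := k) g (∏ i, q i ^ (α i : ℕ)) := by
      rw [map_prod]
      exact Finset.prod_congr rfl fun i _ => by rw [map_pow, hq i]
    rw [h1]
    apply aeval_mem_span hg0
    calc (∏ i, q i ^ (α i : ℕ)).totalDegree
        ≤ ∑ i, (q i ^ (α i : ℕ)).totalDegree := totalDegree_finset_prod _ _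
      _ ≤ ∑ _i : Fin n, M * E' := by
          apply Finset.sum_le_sum
          intro i _
          refine le_trans (totalDegree_pow _ _) ?_
          exact Nat.mul_le_mul (Nat.le_of_lt_succ (α i).isLt)
            (Finset.le_sup (f := fun i => (q i).totalDegree) (Finset.mem_univ i))
      _ = n * M * E' := by
          rw [Finset.sum_const, Finset.card_univ, Fintype.card_fin, smul_eq_mul]
          ring
  have hVfin : FiniteDimensional k V :=
    FiniteDimensional.span_of_finite k (Set.finite_range mono)
  have hnotli : ¬ LinearIndependent k F := by
    intro hli
    have hli' : LinearIndependent k (fun α => (⟨F α, hmem α⟩ : V)) :=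
      LinearIndependent.of_comp V.subtype hli
    have h1 := hli'.fintype_card_le_finrank
    have h2 : Module.finrank k V ≤ Fintype.card ({j : Fin n // j ≠ j₀} → Fin (D + 1)) := by
      refine le_trans (finrank_span_le_card (Set.range mono)) ?_
      rw [Set.toFinset_card]
      exact Fintype.card_range_le mono
    have hcard1 : Fintype.card (Fin n → Fin (M + 1)) = (M + 1) ^ n := by simp
    have hcard2 : Fintype.card ({j : Fin n // j ≠ j₀} → Fin (D + 1))
        = (D + 1) ^ (n - 1) := by
      rw [Fintype.card_fun]
      congr 1
      · simp
      · rw [Fintype.card_subtype_compl, Fintype.card_subtype_eq, Fintype.card_fin]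
    rw [hcard1] at h1
    rw [hcard2] at h2
    have hlt : (D + 1) ^ (n - 1) < (M + 1) ^ n := by
      rw [hD, hM, hc]
      exact count_lt hn
    omega
  obtain ⟨cc, hsum0, α₀, hcc⟩ := Fintype.not_linearIndependent_iff.mp hnotli
  set u2 : (Fin n → Fin (M + 1)) → (Fin n →₀ ℕ) :=
    fun α => Finsupp.equivFunOnFinite.symm (fun i => (α i : ℕ)) with hu2
  have hu2inj : Function.Injective u2 := by
    intro a b hab
    have h3 := Finsupp.equivFunOnFinite.symm.injective hab
    funext i
    exact Fin.val_injective (congrFun h3 i)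
  set Φ := ∑ α, monomial (u2 α) (cc α) with hΦdef
  have hΦne : Φ ≠ 0 := by
    intro h
    apply hcc
    have h4 : coeff (u2 α₀) Φ = cc α₀ := by
      rw [hΦdef, coeff_sum]
      rw [Finset.sum_eq_single α₀ (fun α _ hne => by
        rw [coeff_monomial, if_neg (fun hc => hne (hu2inj hc))]) (by simp)]
      rw [coeff_monomial, if_pos rfl]
    rw [← h4, h, coeff_zero]
  have haev : aeval (R := k) (fun i => w * X i) Φ = 0 := by
    rw [hΦdef, map_sum, ← hsum0]
    refine Finset.sum_congr rfl fun α _ => ?_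
    rw [aeval_monomial, Algebra.smul_def]
    congr 1
    rw [Finsupp.prod_fintype _ _ (fun i => pow_zero _)]
    rfl
  exact no_relation hw hw0 hΦne haev

-- Lemma E : selecting homogeneous components of the inverse
theorem select_homogeneous {k : Type} [Field k] {n : ℕ} (hn : 1 ≤ n) {d : ℕ}
    {g q : Fin n → MvPolynomial (Fin n) k} {w : MvPolynomial (Fin n) k}
    (hg : ∀ i, (g i).IsHomogeneous d) (hw0 : w ≠ 0)
    (hq : ∀ i, aeval (R := k) g (q i) = w * X i) :
    ∃ (e₀ m : ℕ), homogeneousComponent m w ≠ 0 ∧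
      ∀ i, aeval (R := k) g (homogeneousComponent e₀ (q i))
        = homogeneousComponent m w * X i := by
  classical
  -- d ≥ 1
  have hd1 : 1 ≤ d := by
    by_contra hd0
    have hd : d = 0 := by omega
    subst hd
    set i : Fin n := ⟨0, hn⟩
    have hhom : (aeval (R := k) g (q i)).IsHomogeneous 0 := by
      conv_lhs => rw [← sum_homogeneousComponent (q i)]
      rw [map_sum]
      apply IsHomogeneous.sum
      intro e _
      simpa using (homogeneousComponent_isHomogeneous e (q i)).aeval g hg
    have hzero : w * X i = 0 := by
      ext u
      rw [coeff_zero]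
      by_cases hu : u = 0
      · subst hu
        have : constantCoeff (w * X i) = 0 := by
          rw [map_mul, constantCoeff_X, mul_zero]
        simpa [constantCoeff_eq] using this
      · by_contra hne
        rw [hq i] at hhom
        have := hhom hne
        rw [show (1 : Fin n → ℕ) = fun _ => 1 from rfl, ← Finsupp.degree_eq_weight_one] at this
        exact hu (Finsupp.degree_eq_zero_iff u |>.mp this)
    exact mul_ne_zero hw0 (X_ne_zero _) hzero
  -- a nonzero homogeneous component of w
  obtain ⟨m, hm⟩ : ∃ m, homogeneousComponent m w ≠ 0 := by
    by_contra h
    push_neg at h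
    apply hw0
    rw [← sum_homogeneousComponent w]
    exact Finset.sum_eq_zero fun e _ => h e
  -- key identity
  have key : ∀ i : Fin n, (∑ e ∈ Finset.range ((q i).totalDegree + 1),
      if m + 1 = d * e then aeval (R := k) g (homogeneousComponent e (q i)) else 0)
      = homogeneousComponent m w * X i := by
    intro i
    have h0 := congrArg (homogeneousComponent (m + 1)) (hq i)
    have hL : homogeneousComponent (m + 1) (aeval (R := k) g (q i))
        = ∑ e ∈ Finset.range ((q i).totalDegree + 1),
          if m + 1 = d * e then aeval (R := k) g (homogeneousComponent e (q i)) else 0 := by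
      conv_lhs => rw [← sum_homogeneousComponent (q i)]
      rw [map_sum, map_sum]
      refine Finset.sum_congr rfl fun e _ => ?_
      have hh : (aeval (R := k) g (homogeneousComponent e (q i))).IsHomogeneous (d * e) :=
        (homogeneousComponent_isHomogeneous e (q i)).aeval g hg
      exact homogeneousComponent_of_mem hh
    have hR : homogeneousComponent (m + 1) (w * X i)
        = homogeneousComponent m w * X i := by
      conv_lhs => rw [← sum_homogeneousComponent w, Finset.sum_mul, map_sum]
      have hmmem : m ∈ Finset.range (w.totalDegree + 1) := by
        rw [Finset.mem_range]
        by_contra hc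
        exact hm (homogeneousComponent_eq_zero _ _ (by omega))
      rw [Finset.sum_eq_single_of_mem m hmmem (fun e _ hne => by
        rw [homogeneousComponent_of_mem
          ((homogeneousComponent_isHomogeneous e w).mul (isHomogeneous_X _ i))]
        rw [if_neg (by omega)])]
      rw [homogeneousComponent_of_mem
        ((homogeneousComponent_isHomogeneous m w).mul (isHomogeneous_X _ i))]
      rw [if_pos rfl]
    rw [hL, hR] at h0
    exact h0
  by_cases hdvd : ∃ e₀, m + 1 = d * e₀
  · obtain ⟨e₀, he₀⟩ := hdvd
    refine ⟨e₀, m, hm, fun i => ?_⟩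
    have hkey := key i
    have hcond : ∀ e, (m + 1 = d * e) = (e = e₀) := by
      intro e
      apply propext
      constructor
      · intro h
        exact Nat.eq_of_mul_eq_mul_left (by omega) (he₀ ▸ h.symm : d * e = d * e₀)
      · rintro rfl; exact he₀
    simp_rw [hcond] at hkey
    rw [Finset.sum_ite_eq' (Finset.range ((q i).totalDegree + 1)) e₀] at hkey
    by_cases hmem : e₀ ∈ Finset.range ((q i).totalDegree + 1)
    · rw [if_pos hmem] at hkey
      exact hkey
    · rw [if_neg hmem] at hkey
      have hz : homogeneousComponent e₀ (q i) = 0 :=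
        homogeneousComponent_eq_zero _ _ (by
          rw [Finset.mem_range] at hmem
          omega)
      rw [hz, map_zero]
      exact hkey
  · exfalso
    have hkey := key ⟨0, hn⟩
    rw [Finset.sum_eq_zero (fun e _ => by
      rw [if_neg (fun h => hdvd ⟨e, h⟩)])] at hkey
    exact mul_ne_zero hm (X_ne_zero _) hkey.symm

/-- If `g` defines a birational map `G` of `P^{n−1}` then `σ(G)` is a birational map of
`Pⁿ`, and `σ` is multiplicative: `σ(G ∘ G') = σ(G) ∘ σ(G')` as rational maps of `Pⁿ`
(i.e. up to a common nonzero factor). -/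
theorem sigma_birational_and_multiplicative {k : Type} [Field k] {n : ℕ} (hn : 1 ≤ n)
    {d d' : ℕ} (g g' : Fin n → MvPolynomial (Fin n) k)
    (hg : ∀ i, (g i).IsHomogeneous d) (hg' : ∀ i, (g' i).IsHomogeneous d')
    -- `g` and `g'` define birational maps of `P^{n−1}`:
    (hbir : ∃ (g2inv : Fin n → MvPolynomial (Fin n) k) (w : MvPolynomial (Fin n) k),
      w ≠ 0 ∧ ∀ i, aeval (R := k) g (g2inv i) = w * X i)
    (hbir' : ∃ (g2inv' : Fin n → MvPolynomial (Fin n) k) (w' : MvPolynomial (Fin n) k),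
      w' ≠ 0 ∧ ∀ i, aeval (R := k) g' (g2inv' i) = w' * X i) :
    -- `σ(g)` is a birational map of `Pⁿ`:
    (∃ (Ginv : Fin (n + 1) → MvPolynomial (Fin (n + 1)) k)
        (w : MvPolynomial (Fin (n + 1)) k), w ≠ 0 ∧
        ∀ i, aeval (R := k) (sigmaMap hn g) (Ginv i) = w * X i) ∧
    -- multiplicativity: `σ(g ∘ g') = σ(g) ∘ σ(g')` up to a common nonzero factor:
    (∃ h : MvPolynomial (Fin (n + 1)) k, h ≠ 0 ∧
      ∀ i, aeval (R := k) (sigmaMap hn g') (sigmaMap hn g i)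
        = h * sigmaMap hn (fun j => aeval (R := k) g' (g j)) i) := by
  classical
  constructor
  · -- part 1 : σ(g) is birational
    obtain ⟨q, w, hw0, hqw⟩ := hbir
    obtain ⟨e₀, m, hw2, hq2⟩ := select_homogeneous hn hg hw0 hqw
    have hg0 : g ⟨0, hn⟩ ≠ 0 :=
      g_ne_zero hn (homogeneousComponent_isHomogeneous m w) hw2 hq2 ⟨0, hn⟩
    refine ⟨sigmaMap hn (fun i => homogeneousComponent e₀ (q i)),
      X (Fin.castSucc ⟨0, hn⟩) ^ (e₀ + 1)
        * rename Fin.castSucc (homogeneousComponent m w * g ⟨0, hn⟩), ?_, ?_⟩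
    · exact mul_ne_zero (pow_ne_zero _ (X_ne_zero _))
        ((map_ne_zero_iff _ (rename_injective _ (Fin.castSucc_injective n))).mpr
          (mul_ne_zero hw2 hg0))
    · intro i
      induction i using Fin.lastCases with
      | last =>
        rw [sigmaMap_last, map_mul,
          aeval_sigmaMap_rename hn g (homogeneousComponent_isHomogeneous e₀ (q ⟨0, hn⟩)),
          hq2 ⟨0, hn⟩, aeval_X, sigmaMap_last, map_mul (rename Fin.castSucc), rename_X,
          map_mul (rename Fin.castSucc)]
        ring
      | cast j =>
        rw [sigmaMap_castSucc, map_mul, aeval_X, sigmaMap_castSucc hn g ⟨0, hn⟩,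
          aeval_sigmaMap_rename hn g (homogeneousComponent_isHomogeneous e₀ (q j)),
          hq2 j, map_mul (rename Fin.castSucc), rename_X, map_mul (rename Fin.castSucc)]
        ring
  · -- part 2 : multiplicativity
    obtain ⟨q', w', hw'0, hq'w⟩ := hbir'
    obtain ⟨e₀', m', hw'2, hq'2⟩ := select_homogeneous hn hg' hw'0 hq'w
    have hg'0 : g' ⟨0, hn⟩ ≠ 0 :=
      g_ne_zero hn (homogeneousComponent_isHomogeneous m' w') hw'2 hq'2 ⟨0, hn⟩
    refine ⟨X (Fin.castSucc ⟨0, hn⟩) ^ d * rename Fin.castSucc (g' ⟨0, hn⟩), ?_, ?_⟩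
    · exact mul_ne_zero (pow_ne_zero _ (X_ne_zero _))
        ((map_ne_zero_iff _ (rename_injective _ (Fin.castSucc_injective n))).mpr hg'0)
    · intro i
      induction i using Fin.lastCases with
      | last =>
        rw [sigmaMap_last, map_mul, aeval_sigmaMap_rename hn g' (hg ⟨0, hn⟩), aeval_X,
          sigmaMap_last, sigmaMap_last]
        ring
      | cast j =>
        rw [sigmaMap_castSucc, map_mul, aeval_X, sigmaMap_castSucc hn g' ⟨0, hn⟩,
          aeval_sigmaMap_rename hn g' (hg j), sigmaMap_castSucc]
        ring
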